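/- For every boolean function f : {0,1}^n → {0,1} with wt(f) ≤ 4 log₂ n, D_ave(f) ≤ 40. -/

import Mathlib

/-- Decision trees over `n` boolean variables. -/
inductive DTree (n : ℕ) : Type where
  | leaf : Bool → DTree n
  | node : Fin n → DTree n → DTree n → DTree n

namespace DTree

/-- Evaluate a decision tree on an input. -/
def eval {n : ℕ} : DTree n → (Fin n → Bool) → Bool
  | leaf b, _ => b
  | node i t0 t1, x => if x i then eval t1 x else eval t0 x

/-- Number of queries made on input `x`. -/
def cost {n : ℕ} : DTree n → (Fin n → Bool) → ℕ
  | leaf _, _ => 0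
  | node i t0 t1, x => 1 + (if x i then cost t1 x else cost t0 x)

/-- Depth of a decision tree. -/
def depth {n : ℕ} : DTree n → ℕ
  | leaf _ => 0
  | node _ t0 t1 => 1 + max (depth t0) (depth t1)

end DTree

/-- `T` computes `f` with zero error. -/
def Computes {n : ℕ} (T : DTree n) (f : (Fin n → Bool) → Bool) : Prop :=
  ∀ x, T.eval x = f x

/-- Average cost of a decision tree under the uniform distribution. -/
noncomputable def avgCost {n : ℕ} (T : DTree n) : ℝ :=
  (∑ x : Fin n → Bool, (T.cost x : ℝ)) / 2 ^ n

/-- Average-case deterministic query complexity under the uniform distribution. -/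
noncomputable def Dave {n : ℕ} (f : (Fin n → Bool) → Bool) : ℝ :=
  sInf {c : ℝ | ∃ T : DTree n, Computes T f ∧ avgCost T = c}

/-- Worst-case deterministic query complexity. -/
noncomputable def Dworst {n : ℕ} (f : (Fin n → Bool) → Bool) : ℕ :=
  sInf {d : ℕ | ∃ T : DTree n, Computes T f ∧ T.depth = d}

/-- The weight of a boolean function: the number of inputs mapped to `true`. -/
def wt {n : ℕ} (f : (Fin n → Bool) → Bool) : ℕ :=
  (Finset.univ.filter fun x : Fin n → Bool => f x = true).card

/-- `S` is a certificate of `f` on input `x`. -/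
def IsCert {n : ℕ} (f : (Fin n → Bool) → Bool) (x : Fin n → Bool) (S : Finset (Fin n)) : Prop :=
  ∀ y : Fin n → Bool, (∀ i ∈ S, y i = x i) → f y = f x

/-- Certificate complexity of `f` on input `x`. -/
noncomputable def certC {n : ℕ} (f : (Fin n → Bool) → Bool) (x : Fin n → Bool) : ℕ :=
  sInf {k : ℕ | ∃ S : Finset (Fin n), IsCert f x S ∧ S.card = k}

/-- The weight of the subfunction `f|ρ`, where `ρ : Fin n → Option Bool` is a restriction:
the number of inputs consistent with `ρ` on which `f` outputs `true`. -/
def wtR {n : ℕ} (f : (Fin n → Bool) → Bool) (ρ : Fin n → Option Bool) : ℕ :=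
  (Finset.univ.filter fun x : Fin n → Bool =>
    f x = true ∧ ∀ i : Fin n, ∀ b : Bool, ρ i = some b → x i = b).card

/-- Number of coordinates fixed by a restriction. -/
def suppCard {n : ℕ} (ρ : Fin n → Option Bool) : ℕ :=
  (Finset.univ.filter fun i : Fin n => (ρ i).isSome).card

/-- The restriction given by the first `j` steps of a decision-tree path `L`. -/
def PathRho {n : ℕ} (L : List (Fin n × Bool)) (j : ℕ) : Fin n → Option Bool :=
  fun i => (L.take j).lookup i

/-- The path `L` is `δ`-parity with respect to `f`. -/
def DeltaParityPath {n : ℕ} (f : (Fin n → Bool) → Bool) (δ : ℝ)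
    (L : List (Fin n × Bool)) : Prop :=
  ∀ j : ℕ, 1 ≤ j → j ≤ L.length →
    (1/2) * (1 - δ) * (wtR f (PathRho L (j-1)) : ℝ) ≤ (wtR f (PathRho L j) : ℝ) ∧
    (wtR f (PathRho L j) : ℝ) ≤ (1/2) * (1 + δ) * (wtR f (PathRho L (j-1)) : ℝ)

/-- `f` is a `(t,δ)`-parity function: every path of length at most `t` is δ-parity. -/
def ParityFun {n : ℕ} (f : (Fin n → Bool) → Bool) (t : ℕ) (δ : ℝ) : Prop :=
  ∀ L : List (Fin n × Bool), (L.map Prod.fst).Nodup → L.length ≤ t → DeltaParityPath f δ L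

/-- The subfunction `f|ρ`, viewed as a function on the full cube. -/
def restrictFun {n : ℕ} (f : (Fin n → Bool) → Bool) (ρ : Fin n → Option Bool) :
    (Fin n → Bool) → Bool :=
  fun x => f fun i => (ρ i).getD (x i)

/-- Probability mass of the restriction `ρ` under the `p`-random restriction `R_p`. -/
noncomputable def rpMass {n : ℕ} (p : ℝ) (ρ : Fin n → Option Bool) : ℝ :=
  ∏ i : Fin n, if (ρ i).isSome then (1 - p) / 2 else p

/-- `f` is `λ`-critical. -/
def IsCritical {n : ℕ} (lam : ℝ) (f : (Fin n → Bool) → Bool) : Prop :=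
  ∀ p : ℝ, 0 ≤ p → p ≤ 1 → ∀ t : ℕ,
    (∑ ρ : Fin n → Option Bool,
      if t ≤ Dworst (restrictFun f ρ) then rpMass p ρ else 0) ≤ (p * lam) ^ t

-- ===== auxiliary development =====
namespace S5
open DTree

variable {n : ℕ}

def queried : DTree n → Finset (Fin n)
  | .leaf _ => ∅
  | .node i t0 t1 => insert i (queried t0 ∪ queried t1)

lemma cost_update (T : DTree n) (i : Fin n) (b : Bool) (x : Fin n → Bool)
    (h : i ∉ queried T) : T.cost (Function.update x i b) = T.cost x := by
  induction T with
  | leaf c => rfl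
  | node j t0 t1 ih0 ih1 =>
    simp only [queried, Finset.mem_insert, Finset.mem_union] at h
    push_neg at h
    obtain ⟨hij, h0, h1⟩ := h
    have hji : j ≠ i := fun e => hij e.symm
    simp only [cost, Function.update_of_ne hji, ih0 h0, ih1 h1]

def Scost (T : DTree n) : ℕ := ∑ x : Fin n → Bool, T.cost x

lemma card_cube : (Finset.univ : Finset (Fin n → Bool)).card = 2 ^ n := by
  simp [Finset.card_univ]

lemma sum_cost_filter (T : DTree n) (i : Fin n) (h : i ∉ queried T) (b : Bool) :
    ∑ x ∈ Finset.univ.filter (fun x : Fin n → Bool => x i = b), T.cost x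
      = ∑ x ∈ Finset.univ.filter (fun x : Fin n → Bool => x i = !b), T.cost x := by
  apply Finset.sum_nbij' (i := fun x => Function.update x i (!b))
    (j := fun x => Function.update x i b)
  · intro a ha; simp
  · intro a ha; simp
  · intro a ha
    simp only [Finset.mem_filter] at ha
    funext k
    by_cases hk : k = i
    · subst hk; simp [ha.2]
    · simp [Function.update_of_ne hk]
  · intro a ha
    simp only [Finset.mem_filter] at ha
    funext k
    by_cases hk : k = i
    · subst hk; simp [ha.2]
    · simp [Function.update_of_ne hk]
  · intro a ha
    exact (cost_update T i (!b) a h).symm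

lemma two_mul_sum_cost_filter (T : DTree n) (i : Fin n) (h : i ∉ queried T) (b : Bool) :
    2 * ∑ x ∈ Finset.univ.filter (fun x : Fin n → Bool => x i = b), T.cost x = Scost T := by
  have hsplit := Finset.sum_filter_add_sum_filter_not (Finset.univ : Finset (Fin n → Bool))
    (fun x => x i = b) (fun x => T.cost x)
  have hnot : Finset.univ.filter (fun x : Fin n → Bool => ¬ (x i = b))
      = Finset.univ.filter (fun x : Fin n → Bool => x i = !b) := by
    apply Finset.filter_congr; intro x _
    cases b <;> cases hx : x i <;> simp [hx]
  rw [hnot] at hsplit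
  rw [two_mul, Scost, ← hsplit]
  rw [sum_cost_filter T i h b]

lemma Scost_node (i : Fin n) (t0 t1 : DTree n) (h0 : i ∉ queried t0) (h1 : i ∉ queried t1) :
    2 * Scost (DTree.node i t0 t1) = 2 * 2 ^ n + Scost t0 + Scost t1 := by
  have : Scost (DTree.node i t0 t1)
      = 2 ^ n + ((Finset.univ.filter (fun x : Fin n → Bool => x i = true)).sum t1.cost
        + (Finset.univ.filter (fun x : Fin n → Bool => x i = false)).sum t0.cost) := by
    unfold Scost
    simp only [cost]
    rw [Finset.sum_add_distrib]
    congr 1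
    · simp [card_cube]
    · rw [← Finset.sum_filter_add_sum_filter_not (Finset.univ : Finset (Fin n → Bool))
        (fun x => x i = true)]
      congr 1
      · apply Finset.sum_congr rfl; intro x hx
        simp only [Finset.mem_filter] at hx; simp [hx.2]
      · apply Finset.sum_congr
        · apply Finset.filter_congr; intro x _; simp
        · intro x hx
          simp only [Finset.mem_filter] at hx; simp [hx.2]
  rw [this]
  rw [mul_add, mul_add]
  rw [two_mul_sum_cost_filter t1 i h1 true, two_mul_sum_cost_filter t0 i h0 false]
  ring

def surv (f : (Fin n → Bool) → Bool) (F : Finset (Fin n)) (σ : Fin n → Bool) :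
    Finset (Fin n → Bool) :=
  Finset.univ.filter (fun z => f z = true ∧ ∀ i, i ∉ F → z i = σ i)

lemma mem_surv {f : (Fin n → Bool) → Bool} {F : Finset (Fin n)} {σ z} :
    z ∈ surv f F σ ↔ f z = true ∧ ∀ i, i ∉ F → z i = σ i := by
  simp [surv]

def buildA (f : (Fin n → Bool) → Bool) : List (Fin n) → (Fin n → Bool) → DTree n
  | [], σ => .leaf (f σ)
  | i :: l, σ =>
    if surv f ((i :: l).toFinset) σ = ∅ then .leaf false
    else .node i (buildA f l (Function.update σ i false)) (buildA f l (Function.update σ i true))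

lemma buildA_computes (f : (Fin n → Bool) → Bool) :
    ∀ (l : List (Fin n)) (σ x : Fin n → Bool),
      (∀ i, i ∉ l.toFinset → x i = σ i) → (buildA f l σ).eval x = f x := by
  intro l
  induction l with
  | nil =>
    intro σ x hx
    have : x = σ := funext fun i => hx i (by simp)
    subst this; rfl
  | cons i l ih =>
    intro σ x hx
    rw [buildA]
    split_ifs with hA
    · cases hfx : f x
      · rfl
      · exfalso
        have : x ∈ surv f ((i :: l).toFinset) σ := mem_surv.2 ⟨hfx, hx⟩
        rw [hA] at this; simp at this
    · have hcons : ∀ b, x i = b → ∀ k, k ∉ l.toFinset → x k = Function.update σ i b k := by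
        intro b hb k hk
        by_cases hki : k = i
        · subst hki; simpa [Function.update_self] using hb
        · rw [Function.update_of_ne hki]
          exact hx k (by simp [hki, List.mem_toFinset] at hk ⊢; exact fun e => hk e)
      cases hxi : x i
      · simpa [DTree.eval, hxi] using ih (Function.update σ i false) x (hcons false hxi)
      · simpa [DTree.eval, hxi] using ih (Function.update σ i true) x (hcons true hxi)

lemma buildA_queried (f : (Fin n → Bool) → Bool) :
    ∀ (l : List (Fin n)) (σ : Fin n → Bool), queried (buildA f l σ) ⊆ l.toFinset := by
  intro l
  induction l with
  | nil => intro σ; rw [buildA]; simp [queried]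
  | cons i l ih =>
    intro σ
    rw [buildA]
    split_ifs with hA
    · simp [queried]
    · intro k hk
      simp only [queried, Finset.mem_insert, Finset.mem_union] at hk
      rcases hk with h | h | h
      · simp [h]
      · have := ih (Function.update σ i false) h
        simp only [List.mem_toFinset] at this ⊢; exact List.mem_cons_of_mem _ this
      · have := ih (Function.update σ i true) h
        simp only [List.mem_toFinset] at this ⊢; exact List.mem_cons_of_mem _ this

lemma buildA_cost_le (f : (Fin n → Bool) → Bool) :
    ∀ (l : List (Fin n)) (σ x : Fin n → Bool), (buildA f l σ).cost x ≤ l.length := by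
  intro l
  induction l with
  | nil => intro σ x; rw [buildA]; simp [cost]
  | cons i l ih =>
    intro σ x
    rw [buildA]
    split_ifs with hA
    · simp [cost]
    · simp only [cost, List.length_cons]
      cases hxi : x i <;> simp only [hxi, if_false, if_true, Bool.false_eq_true] <;>
        · rw [Nat.add_comm 1]; exact Nat.add_le_add_right (ih _ x) 1

lemma buildA_Scost_le_len (f : (Fin n → Bool) → Bool) (l : List (Fin n)) (σ : Fin n → Bool) :
    Scost (buildA f l σ) ≤ l.length * 2 ^ n := by
  unfold Scost
  calc ∑ x : Fin n → Bool, (buildA f l σ).cost x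
      ≤ ∑ _x : Fin n → Bool, l.length := Finset.sum_le_sum (fun x _ => buildA_cost_le f l σ x)
    _ = l.length * 2 ^ n := by rw [Finset.sum_const, card_cube, smul_eq_mul, Nat.mul_comm]


def psi (s : ℕ) : ℕ := if s = 0 then 0 else 2 + 3 * Nat.clog 2 s

lemma psi_ge_two {s : ℕ} (hs : 1 ≤ s) : 2 ≤ psi s := by
  unfold psi; rw [if_neg (by omega)]; omega

lemma psi_key {s₀ s₁ s : ℕ} (hsum : s₀ + s₁ = s) (hs : 1 ≤ s) :
    2 + psi s₀ + psi s₁ ≤ 2 * psi s := by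
  rcases Nat.eq_zero_or_pos s₀ with h0 | h0
  · have hs1s : s₁ = s := by omega
    have h2 : 2 ≤ psi s := psi_ge_two hs
    have hz : psi s₀ = 0 := by simp [psi, h0]
    rw [hz, hs1s]; omega
  rcases Nat.eq_zero_or_pos s₁ with h1 | h1
  · have hs0s : s₀ = s := by omega
    have h2 : 2 ≤ psi s := psi_ge_two hs
    have hz : psi s₁ = 0 := by simp [psi, h1]
    rw [hz, hs0s]; omega
  -- both positive
  have hs2 : 2 ≤ s := by omega
  set c := Nat.clog 2 s with hc
  have hcpos : 1 ≤ c := by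
    rw [hc]; exact Nat.clog_pos (by norm_num) hs2
  -- wlog via min: one of s₀ s₁ is ≤ s/2  (2 * min ≤ s)
  have key : ∀ a b : ℕ, a + b = s → 1 ≤ a → 1 ≤ b → 2 * a ≤ s →
      2 + psi a + psi b ≤ 2 * psi s := by
    intro a b hab ha hb h2a
    have hca : Nat.clog 2 a ≤ c - 1 := by
      rw [Nat.clog_le_iff_le_pow (by norm_num : 1 < 2)]
      have hsle : s ≤ 2 ^ c := Nat.le_pow_clog (by norm_num) s
      have : 2 * a ≤ 2 ^ c := le_trans h2a hsle
      have hcexp : 2 ^ c = 2 * 2 ^ (c - 1) := by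
        rw [← pow_succ']
        congr 1; omega
      omega
    have hcb : Nat.clog 2 b ≤ c := Nat.clog_mono_right 2 (by omega)
    simp only [psi, if_neg (by omega : ¬ a = 0), if_neg (by omega : ¬ b = 0),
      if_neg (by omega : ¬ s = 0), ← hc]
    omega
  rcases Nat.le_or_le (2 * s₀) s with hh | hh
  · exact key s₀ s₁ hsum h0 h1 hh
  · have := key s₁ s₀ (by omega) h1 h0 (by omega)
    omega

lemma surv_cons_child (f : (Fin n → Bool) → Bool) (i : Fin n) (l : List (Fin n))
    (σ : Fin n → Bool) (hi : i ∉ l.toFinset) (b : Bool) :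
    surv f l.toFinset (Function.update σ i b)
      = (surv f ((i :: l).toFinset) σ).filter (fun z => z i = b) := by
  ext z
  simp only [mem_surv, Finset.mem_filter, List.toFinset_cons]
  constructor
  · rintro ⟨hfz, hcons⟩
    have hzi : z i = b := by
      have := hcons i hi
      rwa [Function.update_self] at this
    refine ⟨⟨hfz, ?_⟩, hzi⟩
    intro k hk
    simp only [Finset.mem_insert, not_or] at hk
    have := hcons k hk.2
    rwa [Function.update_of_ne hk.1] at this
  · rintro ⟨⟨hfz, hcons⟩, hzi⟩
    refine ⟨hfz, ?_⟩
    intro k hk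
    by_cases hki : k = i
    · subst hki; rwa [Function.update_self]
    · rw [Function.update_of_ne hki]
      apply hcons
      simp only [Finset.mem_insert, not_or]
      exact ⟨hki, hk⟩

lemma buildA_Scost (f : (Fin n → Bool) → Bool) :
    ∀ (l : List (Fin n)) (σ : Fin n → Bool), l.Nodup →
      Scost (buildA f l σ) ≤ psi ((surv f l.toFinset σ).card) * 2 ^ n := by
  intro l
  induction l with
  | nil => intro σ _; rw [buildA]; simp [Scost, cost]
  | cons i l ih =>
    intro σ hnd
    have hinl : i ∉ l.toFinset := by
      simp only [List.mem_toFinset]; exact (List.nodup_cons.1 hnd).1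
    have hndl : l.Nodup := (List.nodup_cons.1 hnd).2
    rw [buildA]
    split_ifs with hA
    · simp [Scost, cost]
    · set T0 := buildA f l (Function.update σ i false) with hT0
      set T1 := buildA f l (Function.update σ i true) with hT1
      have hq0 : i ∉ queried T0 := fun hmem => hinl (buildA_queried f l _ hmem)
      have hq1 : i ∉ queried T1 := fun hmem => hinl (buildA_queried f l _ hmem)
      have hnode := Scost_node i T0 T1 hq0 hq1
      set A := surv f ((i :: l).toFinset) σ with hAdef
      set s := A.card with hs
      have hs1 : 1 ≤ s := Finset.card_pos.2 (Finset.nonempty_of_ne_empty hA)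
      have hcard : (surv f l.toFinset (Function.update σ i false)).card
          + (surv f l.toFinset (Function.update σ i true)).card = s := by
        rw [surv_cons_child f i l σ hinl false, surv_cons_child f i l σ hinl true]
        rw [hs, hAdef]
        have := Finset.card_filter_add_card_filter_not
          (s := surv f ((i :: l).toFinset) σ) (p := fun z => z i = false)
        have hfc : Finset.filter (fun z => z i = true) (surv f ((i :: l).toFinset) σ)
            = Finset.filter (fun a => ¬ a i = false) (surv f ((i :: l).toFinset) σ) := by
          apply Finset.filter_congr; intro z _
          cases hz : z i <;> simp [hz]
        rw [← this, hfc]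
      have h0 := ih (Function.update σ i false) hndl
      have h1 := ih (Function.update σ i true) hndl
      rw [← hT0] at h0; rw [← hT1] at h1
      have hkey := psi_key hcard hs1
      set c0 := (surv f l.toFinset (Function.update σ i false)).card
      set c1 := (surv f l.toFinset (Function.update σ i true)).card
      have hfin : 2 * Scost (DTree.node i T0 T1) ≤ 2 * (psi s * 2 ^ n) := by
        calc 2 * Scost (DTree.node i T0 T1)
            = 2 * 2 ^ n + Scost T0 + Scost T1 := hnode
          _ ≤ 2 * 2 ^ n + psi c0 * 2 ^ n + psi c1 * 2 ^ n := by omega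
          _ = (2 + psi c0 + psi c1) * 2 ^ n := by ring
          _ ≤ (2 * psi s) * 2 ^ n := Nat.mul_le_mul_right _ hkey
          _ = 2 * (psi s * 2 ^ n) := by ring
      exact Nat.le_of_mul_le_mul_left hfin (by norm_num)

noncomputable def pickB (A : Finset (Fin n → Bool)) (k : ℕ) : Finset (Fin n → Bool) :=
  (Finset.exists_subset_card_eq (s := A) (min_le_right k A.card)).choose

lemma pickB_subset (A : Finset (Fin n → Bool)) (k : ℕ) : pickB A k ⊆ A :=
  (Finset.exists_subset_card_eq (s := A) (min_le_right k A.card)).choose_spec.1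

lemma pickB_card (A : Finset (Fin n → Bool)) (k : ℕ) : (pickB A k).card = min k A.card :=
  (Finset.exists_subset_card_eq (s := A) (min_le_right k A.card)).choose_spec.2

/-- pigeonhole: if `F` is large, two coordinates agree on all of `B`. -/
lemma exists_pair (B : Finset (Fin n → Bool)) (F : Finset (Fin n))
    (hF : 2 ^ B.card + 2 ≤ F.card) :
    ∃ p : Fin n × Fin n, p.1 ∈ F ∧ p.2 ∈ F ∧ p.1 ≠ p.2 ∧ ∀ z ∈ B, z p.1 = z p.2 := by
  classical
  have hcard : (Finset.univ : Finset ({z // z ∈ B} → Bool)).card < F.card := by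
    rw [Finset.card_univ]
    have : Fintype.card ({z // z ∈ B} → Bool) = 2 ^ B.card := by
      rw [Fintype.card_fun, Fintype.card_coe, Fintype.card_bool]
    omega
  obtain ⟨i, hi, j, hj, hij, heq⟩ := Finset.exists_ne_map_eq_of_card_lt_of_maps_to hcard
    (f := fun i => (fun z : {z // z ∈ B} => z.1 i)) (fun a _ => Finset.mem_univ _)
  exact ⟨(i, j), hi, hj, hij, fun z hz => congrFun heq ⟨z, hz⟩⟩

noncomputable def buildB (f : (Fin n → Bool) → Bool) (t : ℕ) :
    Finset (Fin n) → (Fin n → Bool) → DTree n := fun F σ =>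
  if surv f F σ = ∅ then .leaf false
  else if h : ∃ p : Fin n × Fin n, p.1 ∈ F ∧ p.2 ∈ F ∧ p.1 ≠ p.2 ∧
      ∀ z ∈ pickB (surv f F σ) t, z p.1 = z p.2 then
    .node h.choose.1
      (.node h.choose.2
        (buildB f t ((F.erase h.choose.1).erase h.choose.2)
          (Function.update (Function.update σ h.choose.1 false) h.choose.2 false))
        (buildB f t ((F.erase h.choose.1).erase h.choose.2)
          (Function.update (Function.update σ h.choose.1 false) h.choose.2 true)))
      (.node h.choose.2
        (buildB f t ((F.erase h.choose.1).erase h.choose.2)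
          (Function.update (Function.update σ h.choose.1 true) h.choose.2 false))
        (buildB f t ((F.erase h.choose.1).erase h.choose.2)
          (Function.update (Function.update σ h.choose.1 true) h.choose.2 true)))
  else buildA f F.toList σ
termination_by F => F.card
decreasing_by
  all_goals {
    obtain ⟨h1, h2, h3, -⟩ := h.choose_spec
    have hj := Finset.mem_erase.2 ⟨Ne.symm h3, h2⟩
    exact lt_of_lt_of_le (Finset.card_erase_lt_of_mem hj) Finset.card_erase_le }

lemma surv_pair_child (f : (Fin n → Bool) → Bool) {F : Finset (Fin n)} {i j : Fin n}
    (hi : i ∈ F) (hj : j ∈ F) (hij : i ≠ j) (σ : Fin n → Bool) (a b : Bool) :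
    surv f ((F.erase i).erase j) (Function.update (Function.update σ i a) j b)
      = (surv f F σ).filter (fun z => z i = a ∧ z j = b) := by
  ext z
  simp only [mem_surv, Finset.mem_filter]
  constructor
  · rintro ⟨hfz, hcons⟩
    have hzi : z i = a := by
      have := hcons i (by simp [hij])
      rwa [Function.update_of_ne hij, Function.update_self] at this
    have hzj : z j = b := by
      have := hcons j (by simp)
      rwa [Function.update_self] at this
    refine ⟨⟨hfz, ?_⟩, hzi, hzj⟩
    intro k hk
    have hki : k ≠ i := fun e => hk (e ▸ hi)
    have hkj : k ≠ j := fun e => hk (e ▸ hj)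
    have := hcons k (by simp [Finset.mem_erase, hki, hkj, hk])
    rwa [Function.update_of_ne hkj, Function.update_of_ne hki] at this
  · rintro ⟨⟨hfz, hcons⟩, hzi, hzj⟩
    refine ⟨hfz, ?_⟩
    intro k hk
    by_cases hkj : k = j
    · subst hkj; rwa [Function.update_self]
    by_cases hki : k = i
    · subst hki; rwa [Function.update_of_ne hij, Function.update_self]
    rw [Function.update_of_ne hkj, Function.update_of_ne hki]
    apply hcons
    simp only [Finset.mem_erase, not_and] at hk
    intro hkF
    exact absurd (hk hkj hki) (fun h => h hkF)

lemma buildB_queried (f : (Fin n → Bool) → Bool) (t : ℕ) :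
    ∀ (F : Finset (Fin n)) (σ : Fin n → Bool), queried (buildB f t F σ) ⊆ F := by
  intro F
  induction F using Finset.strongInduction with
  | _ F ih =>
    intro σ
    rw [buildB]
    split_ifs with h0 h
    · simp [queried]
    · obtain ⟨h1, h2, h3, -⟩ := h.choose_spec
      set i := h.choose.1
      set j := h.choose.2
      have hF' : (F.erase i).erase j ⊂ F :=
        Finset.ssubset_of_subset_of_ssubset (Finset.erase_subset _ _) (Finset.erase_ssubset h1)
      have hsub : ∀ σ', queried (buildB f t ((F.erase i).erase j) σ') ⊆ F :=
        fun σ' => le_trans (ih _ hF' σ') hF'.subset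
      intro k hk
      simp only [queried, Finset.mem_insert, Finset.mem_union] at hk
      rcases hk with rfl | (rfl | hk) | (rfl | hk)
      · exact h1
      · exact h2
      · rcases hk with hk | hk
        · exact hsub _ hk
        · exact hsub _ hk
      · exact h2
      · rcases hk with hk | hk
        · exact hsub _ hk
        · exact hsub _ hk
    · intro k hk
      have := buildA_queried f F.toList σ hk
      rwa [Finset.toList_toFinset] at this

lemma buildB_computes (f : (Fin n → Bool) → Bool) (t : ℕ) :
    ∀ (F : Finset (Fin n)) (σ x : Fin n → Bool),
      (∀ k, k ∉ F → x k = σ k) → (buildB f t F σ).eval x = f x := by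
  intro F
  induction F using Finset.strongInduction with
  | _ F ih =>
    intro σ x hx
    rw [buildB]
    split_ifs with h0 h
    · cases hfx : f x
      · rfl
      · exfalso
        have : x ∈ surv f F σ := mem_surv.2 ⟨hfx, hx⟩
        rw [h0] at this; simp at this
    · obtain ⟨h1, h2, h3, -⟩ := h.choose_spec
      set i := h.choose.1
      set j := h.choose.2
      have hF' : (F.erase i).erase j ⊂ F :=
        Finset.ssubset_of_subset_of_ssubset (Finset.erase_subset _ _) (Finset.erase_ssubset h1)
      have hcons : ∀ k, k ∉ (F.erase i).erase j →
          x k = Function.update (Function.update σ i (x i)) j (x j) k := by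
        intro k hk
        by_cases hkj : k = j
        · subst hkj; rw [Function.update_self]
        by_cases hki : k = i
        · subst hki; rw [Function.update_of_ne h3, Function.update_self]
        rw [Function.update_of_ne hkj, Function.update_of_ne hki]
        apply hx
        simp only [Finset.mem_erase, not_and] at hk
        intro hkF
        exact absurd (hk hkj hki) (fun h' => h' hkF)
      have hIH := ih _ hF' (Function.update (Function.update σ i (x i)) j (x j)) x hcons
      cases hxi : x i <;> cases hxj : x j <;>
        simpa [DTree.eval, hxi, hxj] using (by rwa [hxi, hxj] at hIH)
    · apply buildA_computes
      rw [Finset.toList_toFinset]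
      exact hx

/-- `Rc t s = ⌈s/t⌉`. -/
def Rc (t s : ℕ) : ℕ := (s + t - 1) / t

lemma Rc_mono (t : ℕ) {s s' : ℕ} (h : s ≤ s') : Rc t s ≤ Rc t s' :=
  Nat.div_le_div_right (by omega)

lemma Rc_pos {t s : ℕ} (ht : 1 ≤ t) (hs : 1 ≤ s) : 1 ≤ Rc t s := by
  unfold Rc
  rw [Nat.le_div_iff_mul_le (by omega)]
  omega

lemma Rc_drop {t s : ℕ} (ht : 1 ≤ t) (hs : 1 ≤ s) :
    Rc t (s - min t s) + 1 ≤ Rc t s := by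
  rcases Nat.le_or_le s t with hle | hle
  · have : s - min t s = 0 := by omega
    rw [this]
    have h0 : Rc t 0 = 0 := by unfold Rc; rw [Nat.div_eq_of_lt (by omega)]
    rw [h0]
    exact Rc_pos ht hs
  · have hmin : min t s = t := by omega
    rw [hmin]
    unfold Rc
    have e1 : s - t + t - 1 = s - 1 := by omega
    have e2 : s + t - 1 = (s - 1) + t := by omega
    rw [e1, e2, Nat.add_div_right _ (by omega)]

lemma buildB_Scost (f : (Fin n → Bool) → Bool) (t : ℕ) (ht : 1 ≤ t)
    (Hn : 7 * (2 ^ t + 1) ≤ n) :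
    ∀ (F : Finset (Fin n)) (σ : Fin n → Bool),
      6 * Scost (buildB f t F σ)
        ≤ (28 * Rc t (surv f F σ).card + (n - F.card)) * 2 ^ n := by
  intro F
  induction F using Finset.strongInduction with
  | _ F ih =>
    intro σ
    rw [buildB]
    split_ifs with h0 h
    · simp [Scost, DTree.cost]
    · -- main case
      obtain ⟨h1, h2, h3, hagree⟩ := h.choose_spec
      set i := h.choose.1
      set j := h.choose.2
      set F' := (F.erase i).erase j with hF'def
      have hF' : F' ⊂ F :=
        Finset.ssubset_of_subset_of_ssubset (Finset.erase_subset _ _) (Finset.erase_ssubset h1)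
      set A := surv f F σ with hAdef
      set s := A.card with hsdef
      have hs1 : 1 ≤ s := Finset.card_pos.2 (Finset.nonempty_of_ne_empty h0)
      set B := pickB A t with hBdef
      have hBsub : B ⊆ A := pickB_subset A t
      have hBcard : B.card = min t s := pickB_card A t
      -- the four children
      set σ00 := Function.update (Function.update σ i false) j false with hσ00
      set σ01 := Function.update (Function.update σ i false) j true with hσ01
      set σ10 := Function.update (Function.update σ i true) j false with hσ10
      set σ11 := Function.update (Function.update σ i true) j true with hσ11
      set T00 := buildB f t F' σ00 with hT00
      set T01 := buildB f t F' σ01 with hT01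
      set T10 := buildB f t F' σ10 with hT10
      set T11 := buildB f t F' σ11 with hT11
      -- queried facts
      have hiF' : i ∉ F' := by simp [hF'def, Finset.mem_erase]
      have hjF' : j ∉ F' := by simp [hF'def, Finset.mem_erase]
      have hq : ∀ T σ', T = buildB f t F' σ' → (i ∉ queried T ∧ j ∉ queried T) := by
        intro T σ' hT
        subst hT
        constructor
        · exact fun hmem => hiF' (buildB_queried f t F' σ' hmem)
        · exact fun hmem => hjF' (buildB_queried f t F' σ' hmem)
      have hin0 := Scost_node j T00 T01 (hq _ _ hT00).2 (hq _ _ hT01).2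
      have hin1 := Scost_node j T10 T11 (hq _ _ hT10).2 (hq _ _ hT11).2
      have hiq0 : i ∉ queried (DTree.node j T00 T01) := by
        simp only [queried, Finset.mem_insert, Finset.mem_union]
        push_neg
        exact ⟨h3, (hq _ _ hT00).1, (hq _ _ hT01).1⟩
      have hiq1 : i ∉ queried (DTree.node j T10 T11) := by
        simp only [queried, Finset.mem_insert, Finset.mem_union]
        push_neg
        exact ⟨h3, (hq _ _ hT10).1, (hq _ _ hT11).1⟩
      have hout := Scost_node i (DTree.node j T00 T01) (DTree.node j T10 T11) hiq0 hiq1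
      -- survivor cards
      have hchild : ∀ a b : Bool,
          surv f F' (Function.update (Function.update σ i a) j b)
            = A.filter (fun z => z i = a ∧ z j = b) :=
        fun a b => surv_pair_child f h1 h2 h3 σ a b
      have hle_s : ∀ a b : Bool, (A.filter (fun z => z i = a ∧ z j = b)).card ≤ s :=
        fun a b => Finset.card_le_card (Finset.filter_subset _ _)
      have hneq : ∀ a b : Bool, a ≠ b →
          (A.filter (fun z => z i = a ∧ z j = b)).card ≤ s - min t s := by
        intro a b hab
        have hsub : A.filter (fun z => z i = a ∧ z j = b) ⊆ A \ B := by
          intro z hz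
          simp only [Finset.mem_filter] at hz
          obtain ⟨hzA, hza, hzb⟩ := hz
          rw [Finset.mem_sdiff]
          refine ⟨hzA, fun hzB => ?_⟩
          have := hagree z hzB
          rw [hza, hzb] at this
          exact hab this
        calc (A.filter (fun z => z i = a ∧ z j = b)).card
            ≤ (A \ B).card := Finset.card_le_card hsub
          _ = s - B.card := by rw [Finset.card_sdiff_of_subset hBsub]
          _ = s - min t s := by rw [hBcard]
      set R := Rc t s with hRdef
      have hRle : ∀ a b : Bool, Rc t (surv f F' (Function.update (Function.update σ i a) j b)).card ≤ R := by
        intro a b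
        rw [hchild a b]
        exact le_trans (Rc_mono t (hle_s a b)) le_rfl
      have hRlt : ∀ a b : Bool, a ≠ b →
          Rc t (surv f F' (Function.update (Function.update σ i a) j b)).card + 1 ≤ R := by
        intro a b hab
        rw [hchild a b]
        calc Rc t (A.filter (fun z => z i = a ∧ z j = b)).card + 1
            ≤ Rc t (s - min t s) + 1 := by
              exact Nat.add_le_add_right (Rc_mono t (hneq a b hab)) 1
          _ ≤ R := Rc_drop ht hs1
      -- card bookkeeping
      have hFn : F.card ≤ n := le_trans (Finset.card_le_univ F) (by simp)
      have hF2 : 2 ≤ F.card := by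
        have : ({i, j} : Finset (Fin n)) ⊆ F := by
          intro k hk; simp only [Finset.mem_insert, Finset.mem_singleton] at hk
          rcases hk with rfl | rfl; exacts [h1, h2]
        have := Finset.card_le_card this
        rwa [Finset.card_insert_of_notMem (by simp [h3]), Finset.card_singleton] at this
      have hF'card : F'.card = F.card - 2 := by
        rw [hF'def, Finset.card_erase_of_mem (Finset.mem_erase.2 ⟨Ne.symm h3, h2⟩),
          Finset.card_erase_of_mem h1]
        omega
      set q := n - F.card with hqdef
      have hq' : n - F'.card = q + 2 := by omega
      -- induction hypotheses
      have IH00 := ih _ hF' σ00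
      have IH01 := ih _ hF' σ01
      have IH10 := ih _ hF' σ10
      have IH11 := ih _ hF' σ11
      rw [hq'] at IH00 IH01 IH10 IH11
      set X := (2 : ℕ) ^ n with hXdef
      -- per-branch bounds
      have e00 : 6 * Scost T00 ≤ (28 * R + (q + 2)) * X := by
        refine le_trans IH00 (Nat.mul_le_mul_right X ?_)
        have hRa : Rc t (surv f F' σ00).card ≤ R := by rw [hσ00]; exact hRle false false
        omega
      have e11 : 6 * Scost T11 ≤ (28 * R + (q + 2)) * X := by
        refine le_trans IH11 (Nat.mul_le_mul_right X ?_)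
        have hRa : Rc t (surv f F' σ11).card ≤ R := by rw [hσ11]; exact hRle true true
        omega
      have e01 : 6 * Scost T01 + 28 * X ≤ (28 * R + (q + 2)) * X := by
        have hR01 : Rc t (surv f F' σ01).card + 1 ≤ R := by
          rw [hσ01]; exact hRlt false true (by simp)
        calc 6 * Scost T01 + 28 * X
            ≤ (28 * Rc t (surv f F' σ01).card + (q + 2)) * X + 28 * X :=
              Nat.add_le_add_right IH01 _
          _ = (28 * Rc t (surv f F' σ01).card + (q + 2) + 28) * X := by ring
          _ ≤ (28 * R + (q + 2)) * X := Nat.mul_le_mul_right X (by omega)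
      have e10 : 6 * Scost T10 + 28 * X ≤ (28 * R + (q + 2)) * X := by
        have hR10 : Rc t (surv f F' σ10).card + 1 ≤ R := by
          rw [hσ10]; exact hRlt true false (by simp)
        calc 6 * Scost T10 + 28 * X
            ≤ (28 * Rc t (surv f F' σ10).card + (q + 2)) * X + 28 * X :=
              Nat.add_le_add_right IH10 _
          _ = (28 * Rc t (surv f F' σ10).card + (q + 2) + 28) * X := by ring
          _ ≤ (28 * R + (q + 2)) * X := Nat.mul_le_mul_right X (by omega)
      -- combine
      set S := Scost (DTree.node i (DTree.node j T00 T01) (DTree.node j T10 T11)) with hSdef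
      have h4S : 4 * S = 8 * X + (Scost T00 + Scost T01 + Scost T10 + Scost T11) := by
        omega
      have hfin : 24 * S + 56 * X ≤ (28 * R + q) * X * 4 + 56 * X := by
        have hsum : 6 * Scost T00 + (6 * Scost T01 + 28 * X) + (6 * Scost T10 + 28 * X)
            + 6 * Scost T11 ≤ (28 * R + (q + 2)) * X * 4 := by omega
        have hre : (28 * R + (q + 2)) * X * 4 = (28 * R + q) * X * 4 + 2 * X * 4 := by ring
        omega
      omega
    · -- fallback
      have hsmall : F.card ≤ 2 ^ t + 1 := by
        by_contra hbig
        push_neg at hbig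
        apply h
        apply exists_pair
        have : (pickB (surv f F σ) t).card ≤ t := by
          rw [pickB_card]; omega
        have hpow : 2 ^ (pickB (surv f F σ) t).card ≤ 2 ^ t := Nat.pow_le_pow_right (by norm_num) this
        omega
      have hco : 6 * F.card ≤ n - F.card := by
        have hpow : (7 : ℕ) * (2 ^ t + 1) ≤ n := Hn
        omega
      calc 6 * Scost (buildA f F.toList σ)
          ≤ 6 * (F.toList.length * 2 ^ n) := Nat.mul_le_mul_left 6 (buildA_Scost_le_len f F.toList σ)
        _ = 6 * F.card * 2 ^ n := by rw [Finset.length_toList]; ring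
        _ ≤ (n - F.card) * 2 ^ n := Nat.mul_le_mul_right _ hco
        _ ≤ (28 * Rc t (surv f F σ).card + (n - F.card)) * 2 ^ n :=
            Nat.mul_le_mul_right _ (by omega)

lemma avgCost_eq (T : DTree n) : avgCost T = (Scost T : ℝ) / 2 ^ n := by
  unfold avgCost Scost
  push_cast
  rfl

lemma avg_le_of_Scost_le {T : DTree n} {C : ℕ} (hS : Scost T ≤ C * 2 ^ n) :
    avgCost T ≤ (C : ℝ) := by
  rw [avgCost_eq]
  rw [div_le_iff₀ (by positivity : (0:ℝ) < 2 ^ n)]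
  exact_mod_cast hS

lemma Dave_le (f : (Fin n → Bool) → Bool) (T : DTree n) (hT : Computes T f) {C : ℝ}
    (hC : avgCost T ≤ C) : Dave f ≤ C := by
  refine le_trans (csInf_le ?_ ⟨T, hT, rfl⟩) hC
  refine ⟨0, ?_⟩
  rintro c ⟨T', -, rfl⟩
  rw [avgCost_eq]
  positivity

end S5

theorem stmt5 (n : ℕ) (f : (Fin n → Bool) → Bool)
    (h : (wt f : ℝ) ≤ 4 * Real.logb 2 n) :
    Dave f ≤ 40 := by
  classical
  set σ0 : Fin n → Bool := fun _ => false with hσ0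
  rcases le_or_gt (wt f) 4096 with hw | hw
  · -- small weight: use buildA on the full list of coordinates
    set T := S5.buildA f (List.finRange n) σ0 with hT
    have hcomp : Computes T f := by
      intro x
      apply S5.buildA_computes
      intro i hi
      exact absurd (by simp [List.mem_toFinset, List.mem_finRange] : i ∈ (List.finRange n).toFinset) hi
    have hsurv : S5.surv f (List.finRange n).toFinset σ0
        = Finset.univ.filter (fun z => f z = true) := by
      ext z
      simp [S5.mem_surv, List.mem_toFinset, List.mem_finRange]
    have hS := S5.buildA_Scost f (List.finRange n) σ0 (List.nodup_finRange n)
    rw [hsurv] at hS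
    have hpsi : S5.psi ((Finset.univ.filter (fun z => f z = true)).card) ≤ 38 := by
      have hwt : (Finset.univ.filter (fun z => f z = true)).card = wt f := rfl
      rw [hwt]
      unfold S5.psi
      split_ifs with h0
      · omega
      · have hc : Nat.clog 2 (wt f) ≤ 12 := by
          have h1 : Nat.clog 2 (wt f) ≤ Nat.clog 2 4096 := Nat.clog_mono_right 2 hw
          have h2 : Nat.clog 2 4096 = 12 := by
            have : (4096 : ℕ) = 2 ^ 12 := by norm_num
            rw [this, Nat.clog_pow 2 12 (by norm_num)]
          omega
        omega
    have hS' : S5.Scost T ≤ 38 * 2 ^ n :=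
      le_trans hS (Nat.mul_le_mul_right _ hpsi)
    have := S5.avg_le_of_Scost_le (T := T) (C := 38) hS'
    have hfin := S5.Dave_le f T hcomp this
    refine le_trans hfin (by norm_num)
  · -- large weight: n must be astronomically large; use buildB
    set w := wt f with hwdef
    have hn0 : n ≠ 0 := by
      intro hn
      subst hn
      rw [Nat.cast_zero, Real.logb_zero] at h
      have : (4096 : ℝ) < (w : ℝ) := by exact_mod_cast hw
      linarith
    set ℓ := Nat.log 2 n with hℓ
    have hnpow : 2 ^ ℓ ≤ n := Nat.pow_log_le_self 2 hn0
    have hnlt : n < 2 ^ (ℓ + 1) := Nat.lt_pow_succ_log_self (by norm_num) n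
    -- upper bound on w
    have hwle : w ≤ 4 * ℓ + 4 := by
      have h1 : Real.logb 2 n ≤ (ℓ + 1 : ℕ) := by
        have hle : (n : ℝ) ≤ (2 : ℝ) ^ (ℓ + 1) := by
          exact_mod_cast hnlt.le
        calc Real.logb 2 (n : ℝ) ≤ Real.logb 2 ((2:ℝ) ^ (ℓ + 1)) :=
              Real.logb_le_logb_of_le (by norm_num)
                (by exact_mod_cast Nat.pos_of_ne_zero hn0) hle
          _ = ((ℓ + 1 : ℕ) : ℝ) := by
              rw [Real.logb_pow, Real.logb_self_eq_one (by norm_num)]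
              push_cast; ring
      have h2 : (w : ℝ) ≤ 4 * ((ℓ + 1 : ℕ) : ℝ) := le_trans h (by linarith)
      have : (w : ℝ) ≤ ((4 * ℓ + 4 : ℕ) : ℝ) := by push_cast at h2 ⊢; linarith
      exact_mod_cast this
    have hℓbig : 1024 ≤ ℓ := by omega
    set t := ℓ - 3 with ht
    have ht1 : 1 ≤ t := by omega
    have htpow : (8 : ℕ) * 2 ^ t ≤ n := by
      have : (2 : ℕ) ^ ℓ = 8 * 2 ^ t := by
        have : ℓ = t + 3 := by omega
        rw [this]; ring
      omega
    have hHn : 7 * (2 ^ t + 1) ≤ n := by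
      have h7 : (7 : ℕ) ≤ 2 ^ t := by
        calc (7 : ℕ) ≤ 2 ^ 3 := by norm_num
          _ ≤ 2 ^ t := Nat.pow_le_pow_right (by norm_num) (by omega)
      omega
    set T := S5.buildB f t Finset.univ σ0 with hT
    have hcomp : Computes T f := by
      intro x
      apply S5.buildB_computes
      intro k hk
      exact absurd (Finset.mem_univ k) hk
    have hS := S5.buildB_Scost f t ht1 hHn Finset.univ σ0
    have hsurv : S5.surv f (Finset.univ : Finset (Fin n)) σ0
        = Finset.univ.filter (fun z => f z = true) := by
      ext z
      simp [S5.mem_surv]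
    have hcards : (S5.surv f (Finset.univ : Finset (Fin n)) σ0).card = w := by
      rw [hsurv]; rfl
    have hqzero : n - (Finset.univ : Finset (Fin n)).card = 0 := by
      simp
    have hRle5 : S5.Rc t w ≤ 5 := by
      have hw5t : w ≤ 5 * t := by omega
      unfold S5.Rc
      have : (w + t - 1) / t < 6 := by
        rw [Nat.div_lt_iff_lt_mul (by omega : 0 < t)]
        omega
      omega
    rw [hcards, hqzero] at hS
    have hS' : S5.Scost T ≤ 24 * 2 ^ n := by
      have h140 : 6 * S5.Scost T ≤ 140 * 2 ^ n := by
        refine le_trans hS ?_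
        have : 28 * S5.Rc t w + 0 ≤ 140 := by omega
        exact Nat.mul_le_mul_right _ this
      have : 6 * S5.Scost T ≤ 6 * (24 * 2 ^ n) := by
        calc 6 * S5.Scost T ≤ 140 * 2 ^ n := h140
          _ ≤ 144 * 2 ^ n := Nat.mul_le_mul_right _ (by norm_num)
          _ = 6 * (24 * 2 ^ n) := by ring
      exact Nat.le_of_mul_le_mul_left this (by norm_num)
    have := S5.avg_le_of_Scost_le (T := T) (C := 24) hS'
    have hfin := S5.Dave_le f T hcomp this
    refine le_trans hfin (by norm_num)
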